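/- Assume J₁₁ > 0, J₁₂ < 0, set λ_M = J₁₁ − J₁₂, λ_m = J₁₁ + J₁₂, suppose λ_m > 0, and let β̌ ∈ (0,1) be a solution of β̌·artanh(√(1−β̌))/√(1−β̌) = λ_m/λ_M. If β > 2/(β̌·λ_M), then f(x̃,−x̃) > f(x̂,x̂), where x̃ is the unique solution in (0,1) of x = tanh((βλ_M/2)·x) and x̂ is the unique solution in (0,1) of x = tanh((βλ_m/2)·x). -/

import Mathlib

/-- The entropy function 𝓘(x) = ((1+x)log(1+x) + (1-x)log(1-x))/2.
Note `Real.log 0 = 0` in Mathlib, which implements the convention 0·log 0 = 0. -/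
noncomputable def entI (x : ℝ) : ℝ :=
  ((1 + x) * Real.log (1 + x) + (1 - x) * Real.log (1 - x)) / 2

/-- Pressure functional of the symmetric zero-field bipartite mean-field model
(α₁ = α₂ = 1/2, J₁₁ = J₂₂, h₁ = h₂ = 0). -/
noncomputable def fSym (β J11 J12 : ℝ) (μ : ℝ × ℝ) : ℝ :=
  β / 8 * (J11 * (μ.1 ^ 2 + μ.2 ^ 2) + 2 * J12 * μ.1 * μ.2) - (entI μ.1 + entI μ.2) / 2

/-- A critical point of f: a point of the open square (−1,1)² where both partial
derivatives of f vanish. -/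
def IsCritPt (β J11 J12 : ℝ) (μ : ℝ × ℝ) : Prop :=
  μ.1 ∈ Set.Ioo (-1 : ℝ) 1 ∧ μ.2 ∈ Set.Ioo (-1 : ℝ) 1 ∧
    deriv (fun x => fSym β J11 J12 (x, μ.2)) μ.1 = 0 ∧
    deriv (fun y => fSym β J11 J12 (μ.1, y)) μ.2 = 0

/-- The inverse hyperbolic tangent, artanh(x) = (1/2)·log((1+x)/(1−x)). -/
noncomputable def artanh (x : ℝ) : ℝ := (1 / 2) * Real.log ((1 + x) / (1 - x))

noncomputable def atn (x : ℝ) : ℝ := (Real.log (1 + x) - Real.log (1 - x)) / 2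

lemma atn_tanh (t : ℝ) : atn (Real.tanh t) = t := by
  have hc : (0:ℝ) < Real.cosh t := Real.cosh_pos t
  have h1 : 1 + Real.tanh t = Real.exp t / Real.cosh t := by
    rw [Real.tanh_eq_sinh_div_cosh, ← Real.cosh_add_sinh]
    field_simp
  have h2 : 1 - Real.tanh t = Real.exp (-t) / Real.cosh t := by
    rw [Real.tanh_eq_sinh_div_cosh, ← Real.cosh_sub_sinh]
    field_simp
  rw [atn, h1, h2, Real.log_div (Real.exp_ne_zero t) hc.ne',
    Real.log_div (Real.exp_ne_zero (-t)) hc.ne', Real.log_exp, Real.log_exp]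
  ring

lemma hasDerivAt_atn {x : ℝ} (h1 : -1 < x) (h2 : x < 1) :
    HasDerivAt atn ((1 - x ^ 2)⁻¹) x := by
  have hp : (0:ℝ) < 1 + x := by linarith
  have hm : (0:ℝ) < 1 - x := by linarith
  have d1 : HasDerivAt (fun y : ℝ => Real.log (1 + y)) ((1 + x)⁻¹ * 1) x :=
    (Real.hasDerivAt_log hp.ne').comp x (((hasDerivAt_id x).const_add 1))
  have d2 : HasDerivAt (fun y : ℝ => Real.log (1 - y)) ((1 - x)⁻¹ * (-1)) x :=
    (Real.hasDerivAt_log hm.ne').comp x (((hasDerivAt_id x).neg.const_add 1))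
  have := (d1.sub d2).div_const 2
  refine HasDerivAt.congr_deriv this ?_
  rw [show (1:ℝ) - x ^ 2 = (1 + x) * (1 - x) by ring, mul_inv]
  field_simp
  ring

lemma hasDerivAt_entI {x : ℝ} (h1 : -1 < x) (h2 : x < 1) :
    HasDerivAt entI (atn x) x := by
  have hp : (0:ℝ) < 1 + x := by linarith
  have hm : (0:ℝ) < 1 - x := by linarith
  have d1 : HasDerivAt (fun y : ℝ => Real.log (1 + y)) ((1 + x)⁻¹ * 1) x :=
    (Real.hasDerivAt_log hp.ne').comp x (((hasDerivAt_id x).const_add 1))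
  have d2 : HasDerivAt (fun y : ℝ => Real.log (1 - y)) ((1 - x)⁻¹ * (-1)) x :=
    (Real.hasDerivAt_log hm.ne').comp x (((hasDerivAt_id x).neg.const_add 1))
  have e1 : HasDerivAt (fun y : ℝ => (1 + y) * Real.log (1 + y))
      (1 * Real.log (1 + x) + (1 + x) * ((1 + x)⁻¹ * 1)) x :=
    ((hasDerivAt_id x).const_add 1).mul d1
  have e2 : HasDerivAt (fun y : ℝ => (1 - y) * Real.log (1 - y))
      ((-1) * Real.log (1 - x) + (1 - x) * ((1 - x)⁻¹ * (-1))) x := by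
    have := ((hasDerivAt_id x).neg.const_add 1).mul d2
    simpa [Pi.mul_def, ← sub_eq_add_neg] using this
  have := (e1.add e2).div_const 2
  refine HasDerivAt.congr_deriv this ?_
  unfold atn
  field_simp
  ring

lemma continuousOn_entI {c : ℝ} (hc : c < 1) : ContinuousOn entI (Set.Icc 0 c) := by
  have h1 : ∀ x ∈ Set.Icc (0:ℝ) c, (1:ℝ) + x ≠ 0 := fun x hx => by
    have := hx.1; positivity
  have h2 : ∀ x ∈ Set.Icc (0:ℝ) c, (1:ℝ) - x ≠ 0 := fun x hx => by
    have := hx.2; have : x < 1 := lt_of_le_of_lt this hc; intro h; linarith [sub_eq_zero.mp h]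
  unfold entI
  exact (((continuousOn_const.add continuousOn_id).mul
    ((continuousOn_const.add continuousOn_id).log h1)).add
    ((continuousOn_const.sub continuousOn_id).mul
    ((continuousOn_const.sub continuousOn_id).log h2))).div_const 2

lemma continuousOn_atn : ContinuousOn atn (Set.Ico 0 1) := by
  have h1 : ∀ x ∈ Set.Ico (0:ℝ) 1, (1:ℝ) + x ≠ 0 := fun x hx => by
    have := hx.1; positivity
  have h2 : ∀ x ∈ Set.Ico (0:ℝ) 1, (1:ℝ) - x ≠ 0 := fun x hx => by
    have := hx.2; intro h; linarith [sub_eq_zero.mp h]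
  unfold atn
  exact (((continuousOn_const.add continuousOn_id).log h1).sub
    ((continuousOn_const.sub continuousOn_id).log h2)).div_const 2

example : True := trivial

lemma key_ineq (A xt xh : ℝ) (hxt : xt ∈ Set.Ioo (0:ℝ) 1) (hxh : xh ∈ Set.Ioo (0:ℝ) 1)
    (hAt : atn xt = A * xt) :
    A / 2 * xh ^ 2 - entI xh ≤ A / 2 * xt ^ 2 - entI xt := by
  obtain ⟨hxt0, hxt1⟩ := hxt
  obtain ⟨hxh0, hxh1⟩ := hxh
  -- concavity of ψ(x) = A x - atn x on [0,1)
  have conc : StrictConcaveOn ℝ (Set.Ico (0:ℝ) 1) (fun x => A * x - atn x) := by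
    apply StrictAntiOn.strictConcaveOn_of_deriv (convex_Ico 0 1)
    · exact ((continuous_const.mul continuous_id).continuousOn).sub continuousOn_atn
    · rw [interior_Ico]
      have dψ : ∀ z ∈ Set.Ioo (0:ℝ) 1,
          deriv (fun x => A * x - atn x) z = A - (1 - z ^ 2)⁻¹ := by
        intro z hz
        have h := (((hasDerivAt_id z).const_mul A).sub
          (hasDerivAt_atn (by linarith [hz.1]) hz.2))
        simpa [Pi.sub_def] using h.deriv
      intro x hx y hy hxy
      rw [dψ x hx, dψ y hy]
      have p1 : (0:ℝ) < 1 - y ^ 2 := by nlinarith [hy.1, hy.2]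
      have p2 : (1:ℝ) - y ^ 2 < 1 - x ^ 2 := by nlinarith [hx.1, hy.1]
      have := inv_strictAnti₀ p1 p2
      linarith
  have hψxt : A * xt - atn xt = 0 := by rw [hAt]; ring
  have hψ0 : A * (0:ℝ) - atn 0 = 0 := by simp [atn]
  have h0mem : (0:ℝ) ∈ Set.Ico (0:ℝ) 1 := ⟨le_refl _, one_pos⟩
  -- ψ > 0 on (0, xt)
  have hpos : ∀ x ∈ Set.Ioo (0:ℝ) xt, 0 < A * x - atn x := by
    intro x hx
    have ht0 : 0 < x / xt := div_pos hx.1 hxt0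
    have ht1 : x / xt < 1 := (div_lt_one hxt0).mpr hx.2
    have hcomb := conc.2 h0mem ⟨hxt0.le, hxt1⟩ (ne_of_lt hxt0)
      (show (0:ℝ) < 1 - x / xt by linarith) ht0 (by ring)
    have hc : (1 - x / xt) • (0:ℝ) + (x / xt) • xt = x := by
      simp only [smul_eq_mul]; field_simp; ring
    rw [hc] at hcomb
    simp only [smul_eq_mul] at hcomb
    rw [hψ0, hψxt] at hcomb
    linarith
  -- ψ < 0 on (xt, 1)
  have hneg : ∀ x ∈ Set.Ioo xt (1:ℝ), A * x - atn x < 0 := by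
    intro x hx
    have hx0 : 0 < x := lt_trans hxt0 hx.1
    have ht0 : 0 < xt / x := div_pos hxt0 hx0
    have ht1 : xt / x < 1 := (div_lt_one hx0).mpr hx.1
    have hcomb := conc.2 h0mem ⟨hx0.le, hx.2⟩ (ne_of_lt hx0)
      (show (0:ℝ) < 1 - xt / x by linarith) ht0 (by ring)
    have hc : (1 - xt / x) • (0:ℝ) + (xt / x) • x = xt := by
      simp only [smul_eq_mul]; field_simp; ring
    rw [hc] at hcomb
    simp only [smul_eq_mul] at hcomb
    rw [hψ0, hψxt] at hcomb
    nlinarith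
  -- derivative of φ
  have dφ : ∀ z ∈ Set.Ioo (-1:ℝ) 1,
      HasDerivAt (fun x => A / 2 * x ^ 2 - entI x) (A * z - atn z) z := by
    intro z hz
    have h := ((hasDerivAt_pow 2 z).const_mul (A / 2)).sub (hasDerivAt_entI hz.1 hz.2)
    refine HasDerivAt.congr_deriv h ?_
    push_cast
    ring
  rcases lt_trichotomy xh xt with h | h | h
  · -- φ strictly increasing on [0, xt]
    have mono : StrictMonoOn (fun x => A / 2 * x ^ 2 - entI x) (Set.Icc 0 xt) := by
      apply strictMonoOn_of_deriv_pos (convex_Icc 0 xt)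
      · exact ((continuous_const.mul (continuous_pow 2)).continuousOn).sub
          (continuousOn_entI hxt1)
      · rw [interior_Icc]
        intro z hz
        rw [(dφ z ⟨by linarith [hz.1], lt_trans hz.2 hxt1⟩).deriv]
        exact hpos z hz
    exact (mono ⟨hxh0.le, h.le⟩ ⟨hxt0.le, le_refl _⟩ h).le
  · rw [h]
  · -- φ strictly decreasing on [xt, xh]
    have anti : StrictAntiOn (fun x => A / 2 * x ^ 2 - entI x) (Set.Icc xt xh) := by
      apply strictAntiOn_of_deriv_neg (convex_Icc xt xh)
      · exact (((continuous_const.mul (continuous_pow 2)).continuousOn).sub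
          (continuousOn_entI hxh1)).mono (Set.Icc_subset_Icc hxt0.le (le_refl _))
      · rw [interior_Icc]
        intro z hz
        rw [(dφ z ⟨by linarith [lt_trans hxt0 hz.1], lt_trans hz.2 hxh1⟩).deriv]
        exact hneg z ⟨hz.1, lt_trans hz.2 hxh1⟩
    exact (anti ⟨le_refl _, h.le⟩ ⟨h.le, le_refl _⟩ h).le


/-- In the regime β > 2/(β̌λ_M) (with λ_M = J₁₁ − J₁₂, λ_m = J₁₁ + J₁₂ > 0 and β̌ as in
Proposition 2, case 1d), the value of the pressure functional at the maximum point
(x̃,−x̃) exceeds the value at (x̂,x̂). -/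
theorem antidiag_max_dominates (β J11 J12 βch xt xh : ℝ)
    (hJ11 : 0 < J11) (hJ12 : J12 < 0) (hlm : 0 < J11 + J12) (hβ0 : 0 < β)
    (hβch : βch ∈ Set.Ioo (0 : ℝ) 1)
    (hβcheq : βch * artanh (Real.sqrt (1 - βch)) / Real.sqrt (1 - βch)
      = (J11 + J12) / (J11 - J12))
    (hβ : 2 / (βch * (J11 - J12)) < β)
    (hxt : xt ∈ Set.Ioo (0 : ℝ) 1)
    (hxteq : xt = Real.tanh (β * (J11 - J12) / 2 * xt))
    (hxtuniq : ∀ y ∈ Set.Ioo (0 : ℝ) 1, y = Real.tanh (β * (J11 - J12) / 2 * y) → y = xt)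
    (hxh : xh ∈ Set.Ioo (0 : ℝ) 1)
    (hxheq : xh = Real.tanh (β * (J11 + J12) / 2 * xh))
    (hxhuniq : ∀ y ∈ Set.Ioo (0 : ℝ) 1,
      y = Real.tanh (β * (J11 + J12) / 2 * y) → y = xh) :
    fSym β J11 J12 (xh, xh) < fSym β J11 J12 (xt, -xt) := by
  
  set A := β * (J11 - J12) / 2 with hA
  have hAt : atn xt = A * xt := by
    conv_lhs => rw [hxteq]
    rw [atn_tanh]
  have key := key_ineq A xt xh hxt hxh hAt
  have hent : entI (-xt) = entI xt := by
    unfold entI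
    rw [show (1:ℝ) + -xt = 1 - xt by ring, show (1:ℝ) - -xt = 1 + xt by ring]
    ring
  have e1 : fSym β J11 J12 (xt, -xt) = A / 2 * xt ^ 2 - entI xt := by
    simp only [fSym, hent, hA]
    ring
  have e2 : fSym β J11 J12 (xh, xh) = β * (J11 + J12) / 4 * xh ^ 2 - entI xh := by
    simp only [fSym]
    ring
  rw [e1, e2]
  have hsq : 0 < xh ^ 2 := pow_pos hxh.1 2
  have : β * (J11 + J12) / 4 * xh ^ 2 < A / 2 * xh ^ 2 := by
    rw [hA]
    nlinarith [mul_pos hβ0 (neg_pos.mpr hJ12)]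
  linarith
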